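/- Let R be a ring, let N and M be ℤ-indexed chain complexes of R-modules, let (f, g, φ) be a contraction from N to M, and let δ be a perturbation of N that is pointwise nilpotent with respect to φ. Define Σx = Σ_{i≥0} (−1)^i (φδ)^i x, f_δ = f ∘ (id − δ ∘ Σ ∘ φ), g_δ = Σ ∘ g, and φ_δ = Σ ∘ φ. Then g_δ ∘ f_δ + φ_δ ∘ (∂_N + δ) + (∂_N + δ) ∘ φ_δ = id_N. -/
import Mathlib


/-- A contraction between ℤ-graded chain complexes of `R`-modules, presented via total
modules `N` and `M` with internal ℤ-gradings `𝒩`, `ℳ`, differentials `dN`, `dM` of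
degree `-1` squaring to zero, chain maps `f : N → M`, `g : M → N` of degree `0`, and a
homotopy operator `φ : N → N` of degree `+1`, satisfying
`f ∘ g = id`, `g ∘ f + φ ∘ dN + dN ∘ φ = id`, `f ∘ φ = 0`, `φ ∘ g = 0`, `φ ∘ φ = 0`. -/
structure Contraction (R : Type) [Ring R]
    (N : Type) [AddCommGroup N] [Module R N]
    (M : Type) [AddCommGroup M] [Module R M]
    (𝒩 : ℤ → Submodule R N) (ℳ : ℤ → Submodule R M)
    (dN : N →ₗ[R] N) (dM : M →ₗ[R] M)
    (f : N →ₗ[R] M) (g : M →ₗ[R] N) (φ : N →ₗ[R] N) : Prop where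
  gradedN : DirectSum.IsInternal 𝒩
  gradedM : DirectSum.IsInternal ℳ
  dN_deg : ∀ i : ℤ, ∀ x ∈ 𝒩 i, dN x ∈ 𝒩 (i - 1)
  dM_deg : ∀ i : ℤ, ∀ x ∈ ℳ i, dM x ∈ ℳ (i - 1)
  dN_sq : dN ∘ₗ dN = 0
  dM_sq : dM ∘ₗ dM = 0
  f_deg : ∀ i : ℤ, ∀ x ∈ 𝒩 i, f x ∈ ℳ i
  g_deg : ∀ i : ℤ, ∀ x ∈ ℳ i, g x ∈ 𝒩 i
  φ_deg : ∀ i : ℤ, ∀ x ∈ 𝒩 i, φ x ∈ 𝒩 (i + 1)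
  f_chain : dM ∘ₗ f = f ∘ₗ dN
  g_chain : dN ∘ₗ g = g ∘ₗ dM
  fg : f ∘ₗ g = LinearMap.id
  homotopy : g ∘ₗ f + φ ∘ₗ dN + dN ∘ₗ φ = LinearMap.id
  fφ : f ∘ₗ φ = 0
  φg : φ ∘ₗ g = 0
  φφ : φ ∘ₗ φ = 0

/-- The perturbed homotopy identity: `g_δ ∘ f_δ + φ_δ ∘ (dN + δ) + (dN + δ) ∘ φ_δ = id_N`,
where `f_δ = f ∘ (id - δ ∘ S ∘ φ)`, `g_δ = S ∘ g` and `φ_δ = S ∘ φ`. -/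
theorem perturbed_homotopy_identity
    (R : Type) [Ring R]
    (N : Type) [AddCommGroup N] [Module R N]
    (M : Type) [AddCommGroup M] [Module R M]
    (𝒩 : ℤ → Submodule R N) (ℳ : ℤ → Submodule R M)
    (dN : N →ₗ[R] N) (dM : M →ₗ[R] M)
    (f : N →ₗ[R] M) (g : M →ₗ[R] N) (φ : N →ₗ[R] N)
    (hc : Contraction R N M 𝒩 ℳ dN dM f g φ)
    (δ : N →ₗ[R] N)
    (δ_deg : ∀ i : ℤ, ∀ x ∈ 𝒩 i, δ x ∈ 𝒩 (i - 1))
    (δ_pert : (dN + δ) ∘ₗ (dN + δ) = 0)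
    (δ_nil : ∀ x : N, ∃ m : ℕ, ((φ ∘ₗ δ) ^ m) x = 0)
    (S : N →ₗ[R] N)
    (hS : ∀ (x : N) (m : ℕ), ((φ ∘ₗ δ) ^ m) x = 0 →
      S x = ∑ i ∈ Finset.range m, ((-1 : ℤ) ^ i) • (((φ ∘ₗ δ) ^ i) x)) :
    (S ∘ₗ g) ∘ₗ (f ∘ₗ (LinearMap.id - δ ∘ₗ S ∘ₗ φ))
      + (S ∘ₗ φ) ∘ₗ (dN + δ) + (dN + δ) ∘ₗ (S ∘ₗ φ) = LinearMap.id := by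
  have hm1 : ∀ (y : N) (m : ℕ), ((φ ∘ₗ δ) ^ m) y = 0 → ((φ ∘ₗ δ) ^ (m + 1)) y = 0 := by
    intro y m hm
    rw [pow_succ', Module.End.mul_apply, hm, map_zero]
  have hmA : ∀ (y : N) (m : ℕ), ((φ ∘ₗ δ) ^ m) y = 0 →
      ((φ ∘ₗ δ) ^ m) (φ (δ y)) = 0 := by
    intro y m hm
    have h : ((φ ∘ₗ δ) ^ m) ((φ ∘ₗ δ) y) = ((φ ∘ₗ δ) ^ (m + 1)) y := by
      rw [pow_succ, Module.End.mul_apply]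
    simpa [LinearMap.comp_apply] using h.trans (hm1 y m hm)
  -- key1 : geometric series identity  S (A y) = y - S y
  have key1 : ∀ y : N, S (φ (δ y)) = y - S y := by
    intro y
    obtain ⟨m, hm⟩ := δ_nil y
    rw [hS _ m (hmA y m hm), hS y (m + 1) (hm1 y m hm), Finset.sum_range_succ']
    have e1 : ∀ i : ℕ, ((-1 : ℤ) ^ (i + 1)) • (((φ ∘ₗ δ) ^ (i + 1)) y)
        = -(((-1 : ℤ) ^ i) • (((φ ∘ₗ δ) ^ i) (φ (δ y)))) := by
      intro i
      have h1 : ((φ ∘ₗ δ) ^ (i + 1)) y = ((φ ∘ₗ δ) ^ i) (φ (δ y)) := by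
        rw [pow_succ, Module.End.mul_apply, LinearMap.comp_apply]
      rw [h1, pow_succ (-1 : ℤ)]
      rw [mul_comm, neg_one_mul, neg_smul]
    simp only [e1, pow_zero, one_smul, pow_zero, Module.End.one_apply]
    rw [Finset.sum_neg_distrib]
    abel
  -- key2 : A (S y) = y - S y
  have key2 : ∀ y : N, φ (δ (S y)) = y - S y := by
    intro y
    obtain ⟨m, hm⟩ := δ_nil y
    rw [← key1 y, hS y m hm, hS _ m (hmA y m hm)]
    rw [map_sum, map_sum]
    refine Finset.sum_congr rfl fun i _ => ?_
    rw [map_zsmul, map_zsmul]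
    congr 1
    have h1 : ((φ ∘ₗ δ) ^ i) (φ (δ y)) = ((φ ∘ₗ δ) ^ (i + 1)) y := by
      rw [pow_succ, Module.End.mul_apply, LinearMap.comp_apply]
    have h2 : φ (δ (((φ ∘ₗ δ) ^ i) y)) = ((φ ∘ₗ δ) ^ (i + 1)) y := by
      rw [pow_succ', Module.End.mul_apply, LinearMap.comp_apply]
    rw [h2, h1]
  -- pointwise homotopy identity
  have hgf : ∀ y : N, g (f y) = y - φ (dN y) - dN (φ y) := by
    intro y
    have h := LinearMap.congr_fun hc.homotopy y
    simp only [LinearMap.add_apply, LinearMap.comp_apply, LinearMap.id_apply] at h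
    rw [eq_sub_iff_add_eq, eq_sub_iff_add_eq]
    exact (by abel : g (f y) + dN (φ y) + φ (dN y)
      = g (f y) + φ (dN y) + dN (φ y)).trans h
  have hdd : ∀ y : N, dN (dN y) = 0 := by
    intro y
    have h := LinearMap.congr_fun hc.dN_sq y
    simpa [LinearMap.comp_apply] using h
  have hdδ : ∀ y : N, dN (δ y) = -δ (dN y) - δ (δ y) := by
    intro y
    have h := LinearMap.congr_fun δ_pert y
    simp only [LinearMap.comp_apply, LinearMap.add_apply, LinearMap.zero_apply, map_add,
      hdd, zero_add] at h
    have h2 : dN (δ y) + (δ (dN y) + δ (δ y)) = 0 := by rw [← h]; abel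
    rw [eq_sub_iff_add_eq, eq_neg_iff_add_eq_zero, ← h2]
    abel
  ext x
  simp only [LinearMap.add_apply, LinearMap.comp_apply, LinearMap.sub_apply,
    LinearMap.id_apply]
  -- expand everything
  rw [map_sub f, map_sub g, map_sub S, hgf x, hgf (δ (S (φ x)))]
  rw [hdδ (S (φ x))]
  rw [key2 (φ x)]
  simp only [map_add, map_sub, map_neg]
  rw [key1 x, key1 (dN (S (φ x))), key1 (δ (S (φ x)))]
  abel
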